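/- In a dagger category, a map p : B ⟶ A is a †-group inverse of f : A ⟶ B if and only if p is a †-Drazin inverse of f for which axiom [D†.1] holds with k = 1. Moreover, in this case the equalities f ≫ p ≫ f ≫ f† = f ≫ f† and f† ≫ f ≫ p ≫ f = f† ≫ f also hold. -/
import Mathlib


open CategoryTheory

universe v u

/-- A dagger on a category: an identity-on-objects contravariant involution. -/
structure Dagger (C : Type u) [Category.{v} C] where
  dag : ∀ {X Y : C}, (X ⟶ Y) → (Y ⟶ X)
  dag_id : ∀ X : C, dag (𝟙 X) = 𝟙 X
  dag_comp : ∀ {X Y Z : C} (f : X ⟶ Y) (g : Y ⟶ Z), dag (f ≫ g) = dag g ≫ dag f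
  dag_dag : ∀ {X Y : C} (f : X ⟶ Y), dag (dag f) = f

/-- Iterated composition power of an endomorphism, with `cpow x 0 = 𝟙 A`. -/
def cpow {C : Type u} [Category.{v} C] {A : C} (x : A ⟶ A) : ℕ → (A ⟶ A)
  | 0 => 𝟙 A
  | n + 1 => cpow x n ≫ x

/-- `p` is a †-Drazin inverse of `f`. -/
def IsDagDrazinInv {C : Type u} [Category.{v} C] (D : Dagger C)
    {A B : C} (f : A ⟶ B) (p : B ⟶ A) : Prop :=
  (∃ k : ℕ, cpow (f ≫ D.dag f) k ≫ f ≫ p = cpow (f ≫ D.dag f) k ∧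
    p ≫ f ≫ cpow (D.dag f ≫ f) k = cpow (D.dag f ≫ f) k) ∧
  p ≫ f ≫ p = p ∧
  D.dag (f ≫ p) = f ≫ p ∧
  D.dag (p ≫ f) = p ≫ f

/-- `p` is a †-group inverse of `f`. -/
def IsDagGroupInv {C : Type u} [Category.{v} C] (D : Dagger C)
    {A B : C} (f : A ⟶ B) (p : B ⟶ A) : Prop :=
  f ≫ D.dag f ≫ f ≫ p = f ≫ D.dag f ∧
  p ≫ f ≫ D.dag f ≫ f = D.dag f ≫ f ∧
  p ≫ f ≫ p = p ∧
  D.dag (f ≫ p) = f ≫ p ∧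
  D.dag (p ≫ f) = p ≫ f

/-- `p` is a †-group inverse of `f` iff `p` is a †-Drazin inverse of `f` for which
axiom [D†.1] holds with `k = 1`; moreover, in this case two further equalities hold. -/
theorem dagGroupInv_iff {C : Type u} [Category.{v} C] (D : Dagger C)
    {A B : C} (f : A ⟶ B) (p : B ⟶ A) :
    (IsDagGroupInv D f p ↔
      (IsDagDrazinInv D f p ∧
        (f ≫ D.dag f) ≫ f ≫ p = f ≫ D.dag f ∧
        p ≫ f ≫ (D.dag f ≫ f) = D.dag f ≫ f)) ∧
    (IsDagGroupInv D f p →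
      f ≫ p ≫ f ≫ D.dag f = f ≫ D.dag f ∧
      D.dag f ≫ f ≫ p ≫ f = D.dag f ≫ f) := by
  constructor
  · constructor
    · rintro ⟨h1a, h1b, h2, h3, h4⟩
      refine ⟨⟨⟨1, ?_, ?_⟩, h2, h3, h4⟩, ?_, ?_⟩
      · simp only [cpow, Category.id_comp, Category.assoc]; exact h1a
      · simp only [cpow, Category.id_comp, Category.assoc]; exact h1b
      · simp only [Category.assoc]; exact h1a
      · exact h1b
    · rintro ⟨⟨_, h2, h3, h4⟩, e1, e2⟩
      simp only [Category.assoc] at e1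
      exact ⟨e1, e2, h2, h3, h4⟩
  · rintro ⟨h1a, h1b, _h2, _h3, _h4⟩
    constructor
    · have s1 := congrArg (fun x => f ≫ p ≫ x) h1a
      have s2 := congrArg (fun x => f ≫ x ≫ p) h1b
      simp only [Category.assoc] at s1 s2
      exact s1.symm.trans (s2.trans h1a)
    · have t1 := congrArg (fun x => x ≫ p ≫ f) h1b
      have t2 := congrArg (fun x => p ≫ x ≫ f) h1a
      simp only [Category.assoc] at t1 t2
      exact t1.symm.trans (t2.trans h1b)
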